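/- For every symmetric order-t tensor A, the gradient of the polynomial x ↦ ⟨F_t(x), A⟩ satisfies ∇⟨F_t(x), A⟩ = t·⟨F_{t-1}(x) ⊗ I, A⟩ (as a vector-valued identity, where the contraction of A with F_{t-1}(x)⊗I leaves one free index), where F_t is the tensor polynomial F_t(x) = Σ_{(i₀,...,i_r) ∈ 𝒯_t} (-1)^r · t!/(i₀!⋯i_r!) · (x-μ)^{⊗i₀} ⊗ M_{i₁} ⊗ ⋯ ⊗ M_{i_r}. -/

import Mathlib

/-- The contraction of the block tensor product `M_{i₁} ⊗ M_{i₂} ⊗ ⋯` (blocks given by the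
list `l`) against an index tuple `a : Fin l.sum → Fin d`. -/
noncomputable def blockProd {d : ℕ} (M : (j : ℕ) → (Fin j → Fin d) → ℝ) :
    (l : List ℕ) → (Fin l.sum → Fin d) → ℝ
  | [], _ => 1
  | j :: rest, a =>
      M j (fun s => a ⟨s.val, by have := s.isLt; simp only [List.sum_cons]; omega⟩) *
      blockProd M rest
        (fun s => a ⟨j + s.val, by have := s.isLt; simp only [List.sum_cons]; omega⟩)

/-- The tensor `F_t(x) = Σ_{(i₀,…,i_r) ∈ 𝒯_t} (-1)^r (t!/(i₀!⋯i_r!))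
(x-μ)^{⊗i₀} ⊗ M_{i₁} ⊗ ⋯ ⊗ M_{i_r}`, entrywise at index tuple `a`, where the sum ranges
over the finite set `S` of tuples (represented as lists, head `i₀`, tail `(i₁,…,i_r)`). -/
noncomputable def Ftensor {d : ℕ} (μ : Fin d → ℝ) (M : (j : ℕ) → (Fin j → Fin d) → ℝ)
    (t : ℕ) (S : Finset (List ℕ)) (x : Fin d → ℝ) (a : Fin t → Fin d) : ℝ :=
  ∑ l ∈ S,
    if h : l.headI + l.tail.sum = t then
      (-1 : ℝ) ^ l.tail.length *
      ((t.factorial / (l.map Nat.factorial).prod : ℕ) : ℝ) *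
      (∏ s : Fin l.headI,
        (x (a ⟨s.val, by have := s.isLt; omega⟩) - μ (a ⟨s.val, by have := s.isLt; omega⟩))) *
      blockProd M l.tail (fun s => a ⟨l.headI + s.val, by have := s.isLt; omega⟩)
    else 0


private lemma list_prod_fact_dvd (l : List ℕ) :
    (l.map Nat.factorial).prod ∣ l.sum.factorial := by
  induction l with
  | nil => simp
  | cons a l ih =>
    simp only [List.map_cons, List.prod_cons, List.sum_cons]
    calc a.factorial * (l.map Nat.factorial).prod ∣ a.factorial * l.sum.factorial :=
          mul_dvd_mul_left _ ih
      _ ∣ (a + l.sum).factorial := Nat.factorial_mul_factorial_dvd_factorial_add _ _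

private lemma coeff_id (j m R : ℕ) (hR : R ∣ m.factorial) :
    (j + 1) * ((j + 1 + m).factorial / ((j + 1).factorial * R)) =
      (j + 1 + m) * ((j + m).factorial / (j.factorial * R)) := by
  have hRpos : 0 < R := Nat.pos_of_dvd_of_pos hR m.factorial_pos
  have h1 : (j + 1).factorial * R ∣ (j + 1 + m).factorial :=
    dvd_trans (mul_dvd_mul_left _ hR) (Nat.factorial_mul_factorial_dvd_factorial_add _ _)
  have h2 : j.factorial * R ∣ (j + m).factorial :=
    dvd_trans (mul_dvd_mul_left _ hR) (Nat.factorial_mul_factorial_dvd_factorial_add _ _)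
  have hq1 := Nat.div_mul_cancel h1
  have hq2 := Nat.div_mul_cancel h2
  apply Nat.eq_of_mul_eq_mul_right (show 0 < j.factorial * R from
    Nat.mul_pos j.factorial_pos hRpos)
  calc (j + 1) * ((j + 1 + m).factorial / ((j + 1).factorial * R)) * (j.factorial * R)
      = ((j + 1 + m).factorial / ((j + 1).factorial * R)) * ((j + 1) * j.factorial * R) := by
        ring
    _ = ((j + 1 + m).factorial / ((j + 1).factorial * R)) * ((j + 1).factorial * R) := by
        rw [Nat.factorial_succ]
    _ = (j + 1 + m).factorial := hq1
    _ = (j + 1 + m) * (j + m).factorial := by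
        rw [show j + 1 + m = (j + m) + 1 by omega, Nat.factorial_succ]
    _ = (j + 1 + m) * (((j + m).factorial / (j.factorial * R)) * (j.factorial * R)) := by
        rw [hq2]
    _ = (j + 1 + m) * ((j + m).factorial / (j.factorial * R)) * (j.factorial * R) := by ring


def cycPerm (t : ℕ) (s : Fin t) : Equiv.Perm (Fin t) where
  toFun u := if u.val = s.val then ⟨t - 1, by have := s.isLt; omega⟩
    else if u.val < s.val then u else ⟨u.val - 1, by have := u.isLt; omega⟩
  invFun v := if v.val = t - 1 then s
    else if v.val < s.val then v
      else ⟨min (v.val + 1) (t - 1), by have := s.isLt; omega⟩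
  left_inv u := by
    have hu := u.isLt; have hs := s.isLt
    apply Fin.ext
    simp only [apply_ite Fin.val]
    split_ifs <;> simp_all <;> omega
  right_inv v := by
    have hv := v.isLt; have hs := s.isLt
    apply Fin.ext
    simp only [apply_ite Fin.val]
    split_ifs <;> simp_all <;> omega

lemma cycPerm_val' (t sv : ℕ) (hs : sv < t) (uv : ℕ) (hu : uv < t) :
    ((cycPerm t ⟨sv, hs⟩) ⟨uv, hu⟩).val =
      if uv = sv then t - 1 else if uv < sv then uv else uv - 1 := by
  change ((if uv = sv then _ else if uv < sv then (⟨uv, hu⟩ : Fin t) else _ : Fin t)).val = _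
  simp only [apply_ite Fin.val]

def extEquiv (t d : ℕ) (ht : 1 ≤ t) : ((Fin (t - 1) → Fin d) × Fin d) ≃ (Fin t → Fin d) where
  toFun p := fun i => if h : i.val < t - 1 then p.1 ⟨i.val, h⟩ else p.2
  invFun b := (fun u => b ⟨u.val, by have := u.isLt; omega⟩, b ⟨t - 1, by omega⟩)
  left_inv p := by
    ext u
    · simp
    · simp
  right_inv b := by
    funext i
    by_cases h : i.val < t - 1
    · simp only [dif_pos h]
    · have h2 : i.val = t - 1 := by have := i.isLt; omega
      simp only [dif_neg h]; exact congrArg b (Fin.ext h2.symm)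

lemma sum_last_eq {d : ℕ} (t : ℕ) (ht : 1 ≤ t) (k : Fin d) (F : (Fin t → Fin d) → ℝ) :
    (∑ b : Fin t → Fin d, if b ⟨t - 1, by omega⟩ = k then F b else 0)
      = ∑ a' : Fin (t - 1) → Fin d,
          F (fun i => if h : i.val < t - 1 then a' ⟨i.val, h⟩ else k) := by
  rw [← Equiv.sum_comp (extEquiv t d ht), Fintype.sum_prod_type]
  refine Finset.sum_congr rfl fun a' _ => ?_
  have hlast : ∀ v : Fin d, (extEquiv t d ht (a', v)) ⟨t - 1, by omega⟩ = v := by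
    intro v; simp [extEquiv]
  simp only [hlast]
  rw [Finset.sum_ite_eq' Finset.univ k]
  simp [extEquiv]

def permEquiv {d t : ℕ} (σ : Equiv.Perm (Fin t)) : (Fin t → Fin d) ≃ (Fin t → Fin d) where
  toFun b u := b (σ u)
  invFun b u := b (σ.symm u)
  left_inv b := funext fun u => by simp
  right_inv b := funext fun u => by simp

set_option maxHeartbeats 1000000 in
lemma core {d t : ℕ} (μ : Fin d → ℝ) (M : (j : ℕ) → (Fin j → Fin d) → ℝ)
    (A : (Fin t → Fin d) → ℝ) (x : Fin d → ℝ) (k : Fin d) (ht : 1 ≤ t)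
    (hA : ∀ (σ : Equiv.Perm (Fin t)) (a : Fin t → Fin d), A (a ∘ σ) = A a)
    (j : ℕ) (tl : List ℕ) (hsum : j + 1 + tl.sum = t)
    (C C' : ℝ) (hC : ((j : ℝ) + 1) * C = (t : ℝ) * C') :
    ∑ a : Fin t → Fin d,
      (C * blockProd M tl (fun u => a ⟨j + 1 + u.val, by have := u.isLt; omega⟩) * A a) *
        (∑ s : Fin (j + 1),
          (∏ s' ∈ Finset.univ.erase s,
            (x (a ⟨s'.val, by have := s'.isLt; omega⟩) -
             μ (a ⟨s'.val, by have := s'.isLt; omega⟩))) *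
          (if a ⟨s.val, by have := s.isLt; omega⟩ = k then 1 else 0))
      = t * ∑ a' : Fin (t - 1) → Fin d,
          (C' * (∏ u : Fin j,
              (x (a' ⟨u.val, by have := u.isLt; omega⟩) -
               μ (a' ⟨u.val, by have := u.isLt; omega⟩))) *
            blockProd M tl (fun u => a' ⟨j + u.val, by have := u.isLt; omega⟩)) *
          A (fun i => if h : i.val < t - 1 then a' ⟨i.val, h⟩ else k) := by
  classical
  have htl : t - 1 < t := by omega
  have key : ∀ s : Fin (j + 1),
      (∑ a : Fin t → Fin d,
        (C * blockProd M tl (fun u => a ⟨j + 1 + u.val, by have := u.isLt; omega⟩) * A a) *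
          ((∏ s' ∈ Finset.univ.erase s,
            (x (a ⟨s'.val, by have := s'.isLt; omega⟩) -
             μ (a ⟨s'.val, by have := s'.isLt; omega⟩))) *
          (if a ⟨s.val, by have := s.isLt; omega⟩ = k then 1 else 0)))
      = ∑ a' : Fin (t - 1) → Fin d,
          (C * blockProd M tl (fun u => a' ⟨j + u.val, by have := u.isLt; omega⟩) *
            A (fun i => if h : i.val < t - 1 then a' ⟨i.val, h⟩ else k)) *
          (∏ u : Fin j,
            (x (a' ⟨u.val, by have := u.isLt; omega⟩) -
             μ (a' ⟨u.val, by have := u.isLt; omega⟩))) := by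
    intro s
    have hsv : (s : ℕ) < t := by have := s.isLt; omega
    set σ := cycPerm t ⟨s.val, hsv⟩ with hσ
    have hval : ∀ (n : ℕ) (p : n < t),
        (σ ⟨n, p⟩ : Fin t).val = if n = s.val then t - 1 else if n < s.val then n else n - 1 :=
      fun n p => by rw [hσ]; exact cycPerm_val' t s.val hsv n p
    clear_value σ
    rw [← Equiv.sum_comp (permEquiv (d := d) σ)]
    calc ∑ b : Fin t → Fin d,
          (C * blockProd M tl (fun u => permEquiv (d := d) σ b ⟨j + 1 + u.val, by have := u.isLt; omega⟩) * A (permEquiv (d := d) σ b)) *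
            ((∏ s' ∈ Finset.univ.erase s,
              (x (permEquiv (d := d) σ b ⟨s'.val, by have := s'.isLt; omega⟩) -
               μ (permEquiv (d := d) σ b ⟨s'.val, by have := s'.isLt; omega⟩))) *
            (if permEquiv (d := d) σ b ⟨s.val, by have := s.isLt; omega⟩ = k then 1 else 0))
        = ∑ b : Fin t → Fin d,
          (if b ⟨t - 1, htl⟩ = k then
            (C * blockProd M tl (fun u => b ⟨j + u.val, by have := u.isLt; omega⟩) * A b) *
              (∏ u : Fin j,
                (x (b ⟨u.val, by have := u.isLt; omega⟩) -
                 μ (b ⟨u.val, by have := u.isLt; omega⟩)))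
           else 0) := by
          refine Finset.sum_congr rfl fun b _ => ?_
          show (C * blockProd M tl (fun u => b (σ ⟨j + 1 + u.val, by have := u.isLt; omega⟩)) *
              A (fun u => b (σ u))) *
            ((∏ s' ∈ Finset.univ.erase s,
              (x (b (σ ⟨s'.val, by have := s'.isLt; omega⟩)) -
               μ (b (σ ⟨s'.val, by have := s'.isLt; omega⟩)))) *
            (if b (σ ⟨s.val, by have := s.isLt; omega⟩) = k then 1 else 0)) = _
          have hb1 : b (σ ⟨s.val, by have := s.isLt; omega⟩) = b ⟨t - 1, htl⟩ := by
            refine congrArg b (Fin.ext ?_)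
            rw [hval]
            simp
          have hblk : (fun u : Fin tl.sum => b (σ ⟨j + 1 + u.val, by have := u.isLt; omega⟩))
              = fun u : Fin tl.sum => b ⟨j + u.val, by have := u.isLt; omega⟩ := by
            funext u
            refine congrArg b (Fin.ext ?_)
            rw [hval]
            simp only [Fin.val_mk]
            have := u.isLt; have := s.isLt
            split_ifs <;> omega
          have hprod : (∏ s' ∈ Finset.univ.erase s,
                (x (b (σ ⟨s'.val, by have := s'.isLt; omega⟩)) -
                 μ (b (σ ⟨s'.val, by have := s'.isLt; omega⟩))))
              = ∏ u : Fin j,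
                (x (b ⟨u.val, by have := u.isLt; omega⟩) -
                 μ (b ⟨u.val, by have := u.isLt; omega⟩)) := by
            refine Finset.prod_bij'
              (fun (s' : Fin (j + 1)) (hs' : s' ∈ Finset.univ.erase s) =>
                (⟨if s'.val < s.val then s'.val else s'.val - 1, by
                  have hne : s' ≠ s := Finset.ne_of_mem_erase hs'
                  have hne' : s'.val ≠ s.val := fun hh => hne (Fin.ext hh)
                  have := s'.isLt; have := s.isLt; split_ifs <;> omega⟩ : Fin j))
              (fun (u : Fin j) _ =>
                (⟨if u.val < s.val then u.val else u.val + 1, by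
                  have := u.isLt; split_ifs <;> omega⟩ : Fin (j + 1)))
              ?_ ?_ ?_ ?_ ?_
            · intro a ha; exact Finset.mem_univ _
            · intro u hu
              refine Finset.mem_erase.mpr ⟨?_, Finset.mem_univ _⟩
              intro hh
              have h1 := congrArg Fin.val hh
              simp only [Fin.val_mk] at h1
              have h2 := u.isLt
              split_ifs at h1 <;> omega
            · intro a ha
              have hne : a ≠ s := Finset.ne_of_mem_erase ha
              have hne' : a.val ≠ s.val := fun hh => hne (Fin.ext hh)
              apply Fin.ext
              simp only [Fin.val_mk]
              have := a.isLt
              split_ifs <;> omega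
            · intro u hu
              apply Fin.ext
              simp only [Fin.val_mk]
              have := u.isLt
              split_ifs <;> omega
            · intro a ha
              have hne : a ≠ s := Finset.ne_of_mem_erase ha
              have hne' : a.val ≠ s.val := fun hh => hne (Fin.ext hh)
              have harg : b (σ ⟨a.val, by have := a.isLt; omega⟩)
                  = b ⟨if a.val < s.val then a.val else a.val - 1, by
                      have := a.isLt; split_ifs <;> omega⟩ := by
                refine congrArg b (Fin.ext ?_)
                rw [hval]
                simp only [Fin.val_mk]
                split_ifs <;> omega
              exact congrArg (fun v => x v - μ v) harg
          have hAb : A (fun u => b (σ u)) = A b := hA σ b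
          rw [hb1, hblk, hprod, hAb]
          by_cases hbk : b ⟨t - 1, htl⟩ = k
          · rw [if_pos hbk, if_pos hbk]; ring
          · rw [if_neg hbk, if_neg hbk]; ring
      _ = ∑ a' : Fin (t - 1) → Fin d,
          (C * blockProd M tl (fun u : Fin tl.sum =>
              (fun i : Fin t => if h : i.val < t - 1 then a' ⟨i.val, h⟩ else k)
                ⟨j + u.val, by have := u.isLt; omega⟩) *
            A (fun i : Fin t => if h : i.val < t - 1 then a' ⟨i.val, h⟩ else k)) *
          (∏ u : Fin j,
            (x ((fun i : Fin t => if h : i.val < t - 1 then a' ⟨i.val, h⟩ else k)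
                  ⟨u.val, by have := u.isLt; omega⟩) -
             μ ((fun i : Fin t => if h : i.val < t - 1 then a' ⟨i.val, h⟩ else k)
                  ⟨u.val, by have := u.isLt; omega⟩))) :=
        sum_last_eq t ht k _
      _ = ∑ a' : Fin (t - 1) → Fin d,
          (C * blockProd M tl (fun u => a' ⟨j + u.val, by have := u.isLt; omega⟩) *
            A (fun i => if h : i.val < t - 1 then a' ⟨i.val, h⟩ else k)) *
          (∏ u : Fin j,
            (x (a' ⟨u.val, by have := u.isLt; omega⟩) -
             μ (a' ⟨u.val, by have := u.isLt; omega⟩))) := by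
          refine Finset.sum_congr rfl fun a' _ => ?_
          have h2 : ∀ (n : ℕ) (p : n < t) (q : n < t - 1),
              (fun i : Fin t => if h : i.val < t - 1 then a' ⟨i.val, h⟩ else k) ⟨n, p⟩
                = a' ⟨n, q⟩ := fun n p q => dif_pos q
          have hblk2 : (fun u : Fin tl.sum =>
              (fun i : Fin t => if h : i.val < t - 1 then a' ⟨i.val, h⟩ else k)
                ⟨j + u.val, by have := u.isLt; omega⟩)
              = fun u : Fin tl.sum => a' ⟨j + u.val, by have := u.isLt; omega⟩ :=
            funext fun u => h2 _ _ (by have := u.isLt; omega)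
          have hprod2 : (∏ u : Fin j,
              (x ((fun i : Fin t => if h : i.val < t - 1 then a' ⟨i.val, h⟩ else k)
                    ⟨u.val, by have := u.isLt; omega⟩) -
               μ ((fun i : Fin t => if h : i.val < t - 1 then a' ⟨i.val, h⟩ else k)
                    ⟨u.val, by have := u.isLt; omega⟩)))
              = ∏ u : Fin j,
                (x (a' ⟨u.val, by have := u.isLt; omega⟩) -
                 μ (a' ⟨u.val, by have := u.isLt; omega⟩)) := by
            refine Finset.prod_congr rfl fun u _ => ?_
            rw [h2 u.val (by have := u.isLt; omega) (by have := u.isLt; omega)]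
          rw [hblk2, hprod2]
  calc ∑ a : Fin t → Fin d,
        (C * blockProd M tl (fun u => a ⟨j + 1 + u.val, by have := u.isLt; omega⟩) * A a) *
          (∑ s : Fin (j + 1),
            (∏ s' ∈ Finset.univ.erase s,
              (x (a ⟨s'.val, by have := s'.isLt; omega⟩) -
               μ (a ⟨s'.val, by have := s'.isLt; omega⟩))) *
            (if a ⟨s.val, by have := s.isLt; omega⟩ = k then 1 else 0))
      = ∑ s : Fin (j + 1), ∑ a : Fin t → Fin d,
        (C * blockProd M tl (fun u => a ⟨j + 1 + u.val, by have := u.isLt; omega⟩) * A a) *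
          ((∏ s' ∈ Finset.univ.erase s,
            (x (a ⟨s'.val, by have := s'.isLt; omega⟩) -
             μ (a ⟨s'.val, by have := s'.isLt; omega⟩))) *
          (if a ⟨s.val, by have := s.isLt; omega⟩ = k then 1 else 0)) := by
        simp only [Finset.mul_sum]
        rw [Finset.sum_comm]
    _ = ∑ s : Fin (j + 1), ∑ a' : Fin (t - 1) → Fin d,
          (C * blockProd M tl (fun u => a' ⟨j + u.val, by have := u.isLt; omega⟩) *
            A (fun i => if h : i.val < t - 1 then a' ⟨i.val, h⟩ else k)) *
          (∏ u : Fin j,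
            (x (a' ⟨u.val, by have := u.isLt; omega⟩) -
             μ (a' ⟨u.val, by have := u.isLt; omega⟩))) :=
        Finset.sum_congr rfl fun s _ => key s
    _ = (j + 1 : ℝ) * ∑ a' : Fin (t - 1) → Fin d,
          (C * blockProd M tl (fun u => a' ⟨j + u.val, by have := u.isLt; omega⟩) *
            A (fun i => if h : i.val < t - 1 then a' ⟨i.val, h⟩ else k)) *
          (∏ u : Fin j,
            (x (a' ⟨u.val, by have := u.isLt; omega⟩) -
             μ (a' ⟨u.val, by have := u.isLt; omega⟩))) := by
        rw [Finset.sum_const, Finset.card_univ, Fintype.card_fin, nsmul_eq_mul]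
        push_cast
        ring
    _ = t * ∑ a' : Fin (t - 1) → Fin d,
          (C' * (∏ u : Fin j,
              (x (a' ⟨u.val, by have := u.isLt; omega⟩) -
               μ (a' ⟨u.val, by have := u.isLt; omega⟩))) *
            blockProd M tl (fun u => a' ⟨j + u.val, by have := u.isLt; omega⟩)) *
          A (fun i => if h : i.val < t - 1 then a' ⟨i.val, h⟩ else k) := by
        rw [Finset.mul_sum, Finset.mul_sum]
        refine Finset.sum_congr rfl fun a' _ => ?_
        linear_combination (blockProd M tl (fun u => a' ⟨j + u.val, by have := u.isLt; omega⟩) *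
          A (fun i => if h : i.val < t - 1 then a' ⟨i.val, h⟩ else k) *
          (∏ u : Fin j,
            (x (a' ⟨u.val, by have := u.isLt; omega⟩) -
             μ (a' ⟨u.val, by have := u.isLt; omega⟩)))) * hC


noncomputable def monDeriv {d : ℕ} (μ x : Fin d → ℝ) (n : ℕ) (b : Fin n → Fin d) :
    (Fin d → ℝ) →L[ℝ] ℝ :=
  ∑ s : Fin n, (∏ s' ∈ Finset.univ.erase s, (x (b s') - μ (b s'))) •
    (ContinuousLinearMap.proj (b s) : (Fin d → ℝ) →L[ℝ] ℝ)

lemma monDeriv_hasFDerivAt {d : ℕ} (μ x : Fin d → ℝ) (n : ℕ) (b : Fin n → Fin d) :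
    HasFDerivAt (fun y : Fin d → ℝ => ∏ s : Fin n, (y (b s) - μ (b s)))
      (monDeriv μ x n b) x :=
  HasFDerivAt.finset_prod fun s _ =>
    ((ContinuousLinearMap.proj (b s) : (Fin d → ℝ) →L[ℝ] ℝ).hasFDerivAt).sub_const (μ (b s))

lemma monDeriv_single {d : ℕ} (μ x : Fin d → ℝ) (n : ℕ) (b : Fin n → Fin d) (k : Fin d) :
    monDeriv μ x n b (Pi.single k 1) =
      ∑ s : Fin n, (∏ s' ∈ Finset.univ.erase s, (x (b s') - μ (b s'))) *
        (if b s = k then 1 else 0) := by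
  simp [monDeriv, Pi.single_apply]

noncomputable def Lmap {d : ℕ} (μ : Fin d → ℝ) (M : (j : ℕ) → (Fin j → Fin d) → ℝ)
    (t : ℕ) (A : (Fin t → Fin d) → ℝ) (x : Fin d → ℝ) (a : Fin t → Fin d) (l : List ℕ) :
    (Fin d → ℝ) →L[ℝ] ℝ :=
  if h : l.headI + l.tail.sum = t then
    ((-1 : ℝ) ^ l.tail.length *
      ((t.factorial / (l.map Nat.factorial).prod : ℕ) : ℝ) *
      blockProd M l.tail (fun s => a ⟨l.headI + s.val, by have := s.isLt; omega⟩) * A a) •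
    monDeriv μ x l.headI (fun s => a ⟨s.val, by have := s.isLt; omega⟩)
  else 0

noncomputable def entD {d : ℕ} (μ : Fin d → ℝ) (M : (j : ℕ) → (Fin j → Fin d) → ℝ)
    (t : ℕ) (A : (Fin t → Fin d) → ℝ) (x : Fin d → ℝ) (k : Fin d)
    (a : Fin t → Fin d) (l : List ℕ) : ℝ :=
  if h : l.headI + l.tail.sum = t then
    ((-1 : ℝ) ^ l.tail.length *
      ((t.factorial / (l.map Nat.factorial).prod : ℕ) : ℝ) *
      blockProd M l.tail (fun s => a ⟨l.headI + s.val, by have := s.isLt; omega⟩) * A a) *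
    (∑ s : Fin l.headI,
      (∏ s' ∈ Finset.univ.erase s,
        (x (a ⟨s'.val, by have := s'.isLt; omega⟩) -
         μ (a ⟨s'.val, by have := s'.isLt; omega⟩))) *
      (if a ⟨s.val, by have := s.isLt; omega⟩ = k then 1 else 0))
  else 0

lemma Lmap_single {d : ℕ} (μ : Fin d → ℝ) (M : (j : ℕ) → (Fin j → Fin d) → ℝ)
    (t : ℕ) (A : (Fin t → Fin d) → ℝ) (x : Fin d → ℝ) (k : Fin d)
    (a : Fin t → Fin d) (l : List ℕ) :
    Lmap μ M t A x a l (Pi.single k 1) = entD μ M t A x k a l := by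
  by_cases h : l.headI + l.tail.sum = t
  · simp only [Lmap, entD, dif_pos h, ContinuousLinearMap.smul_apply, smul_eq_mul,
      monDeriv_single]
  · simp only [Lmap, entD, dif_neg h, ContinuousLinearMap.zero_apply]

lemma hasFDeriv_main {d : ℕ} (μ : Fin d → ℝ) (M : (j : ℕ) → (Fin j → Fin d) → ℝ)
    (t : ℕ) (St : Finset (List ℕ)) (A : (Fin t → Fin d) → ℝ) (x : Fin d → ℝ) :
    HasFDerivAt (fun y => ∑ a : Fin t → Fin d, Ftensor μ M t St y a * A a)
      (∑ a : Fin t → Fin d, ∑ l ∈ St, Lmap μ M t A x a l) x := by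
  apply HasFDerivAt.fun_sum
  intro a _
  have hrw : (fun y => Ftensor μ M t St y a * A a)
      = fun y : Fin d → ℝ => ∑ l ∈ St,
          (if h : l.headI + l.tail.sum = t then
            (-1 : ℝ) ^ l.tail.length *
            ((t.factorial / (l.map Nat.factorial).prod : ℕ) : ℝ) *
            (∏ s : Fin l.headI,
              (y (a ⟨s.val, by have := s.isLt; omega⟩) -
               μ (a ⟨s.val, by have := s.isLt; omega⟩))) *
            blockProd M l.tail (fun s => a ⟨l.headI + s.val, by have := s.isLt; omega⟩)
          else 0) * A a := by
    funext y
    rw [show Ftensor μ M t St y a = ∑ l ∈ St,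
          (if h : l.headI + l.tail.sum = t then
            (-1 : ℝ) ^ l.tail.length *
            ((t.factorial / (l.map Nat.factorial).prod : ℕ) : ℝ) *
            (∏ s : Fin l.headI,
              (y (a ⟨s.val, by have := s.isLt; omega⟩) -
               μ (a ⟨s.val, by have := s.isLt; omega⟩))) *
            blockProd M l.tail (fun s => a ⟨l.headI + s.val, by have := s.isLt; omega⟩)
          else 0) from rfl, Finset.sum_mul]
  rw [hrw]
  apply HasFDerivAt.fun_sum
  intro l _
  by_cases hc : l.headI + l.tail.sum = t
  · have hfun2 : (fun y : Fin d → ℝ => (if h : l.headI + l.tail.sum = t then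
            (-1 : ℝ) ^ l.tail.length *
            ((t.factorial / (l.map Nat.factorial).prod : ℕ) : ℝ) *
            (∏ s : Fin l.headI,
              (y (a ⟨s.val, by have := s.isLt; omega⟩) -
               μ (a ⟨s.val, by have := s.isLt; omega⟩))) *
            blockProd M l.tail (fun s => a ⟨l.headI + s.val, by have := s.isLt; omega⟩)
          else 0) * A a)
        = fun y => ((-1 : ℝ) ^ l.tail.length *
            ((t.factorial / (l.map Nat.factorial).prod : ℕ) : ℝ) *
            (∏ s : Fin l.headI,
              (y (a ⟨s.val, by have := s.isLt; omega⟩) -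
               μ (a ⟨s.val, by have := s.isLt; omega⟩))) *
            blockProd M l.tail (fun s => a ⟨l.headI + s.val, by have := s.isLt; omega⟩)) *
            A a := by
      funext y
      rw [dif_pos hc]
    rw [hfun2]
    have hL : Lmap μ M t A x a l
        = ((-1 : ℝ) ^ l.tail.length *
            ((t.factorial / (l.map Nat.factorial).prod : ℕ) : ℝ) *
            blockProd M l.tail (fun s => a ⟨l.headI + s.val, by have := s.isLt; omega⟩) *
            A a) •
          monDeriv μ x l.headI (fun s => a ⟨s.val, by have := s.isLt; omega⟩) := by
      simp only [Lmap, dif_pos hc]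
    rw [hL]
    have h3 := (((monDeriv_hasFDerivAt μ x l.headI
        (fun s : Fin l.headI => a ⟨s.val, by have := s.isLt; omega⟩)).const_mul
          ((-1 : ℝ) ^ l.tail.length *
            ((t.factorial / (l.map Nat.factorial).prod : ℕ) : ℝ))).mul_const
        (blockProd M l.tail
          (fun s => a ⟨l.headI + s.val, by have := s.isLt; omega⟩))).mul_const (A a)
    refine h3.congr_fderiv ?_
    ext v
    simp only [ContinuousLinearMap.smul_apply, smul_eq_mul]
    ring
  · have hfun2 : (fun y : Fin d → ℝ => (if h : l.headI + l.tail.sum = t then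
            (-1 : ℝ) ^ l.tail.length *
            ((t.factorial / (l.map Nat.factorial).prod : ℕ) : ℝ) *
            (∏ s : Fin l.headI,
              (y (a ⟨s.val, by have := s.isLt; omega⟩) -
               μ (a ⟨s.val, by have := s.isLt; omega⟩))) *
            blockProd M l.tail (fun s => a ⟨l.headI + s.val, by have := s.isLt; omega⟩)
          else 0) * A a) = fun _ => (0 : ℝ) := by
      funext y
      rw [dif_neg hc, zero_mul]
    rw [hfun2]
    have : Lmap μ M t A x a l = 0 := by simp only [Lmap, dif_neg hc]
    rw [this]
    exact hasFDerivAt_const 0 x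

lemma headI_cons_tail {α : Type*} [Inhabited α] (l : List α) (h : l ≠ []) :
    l.headI :: l.tail = l := by
  cases l with
  | nil => exact absurd rfl h
  | cons a l => rfl

lemma headI_add_tail_sum (l : List ℕ) (h : l ≠ []) : l.headI + l.tail.sum = l.sum := by
  cases l with
  | nil => exact absurd rfl h
  | cons a l => simp

/-- For every symmetric order-`t` tensor `A` (and symmetric fixed tensors `M_j`),
`∇⟨F_t(x), A⟩ = t ⟨F_{t-1}(x) ⊗ I, A⟩`, i.e. the directional derivative along the `k`-th
coordinate equals `t Σ_{a'} F_{t-1}(x)_{a'} A_{(a', k)}`. -/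
theorem stmt_11 {d : ℕ} (t : ℕ) (ht : 1 ≤ t) (μ : Fin d → ℝ)
    (M : (j : ℕ) → (Fin j → Fin d) → ℝ)
    (hMsymm : ∀ (j : ℕ) (σ : Equiv.Perm (Fin j)) (a : Fin j → Fin d), M j (a ∘ σ) = M j a)
    (St St' : Finset (List ℕ))
    (hSt : ∀ l, l ∈ St ↔ (l ≠ [] ∧ l.sum = t ∧ ∀ s ∈ l.tail, 2 ≤ s))
    (hSt' : ∀ l, l ∈ St' ↔ (l ≠ [] ∧ l.sum = t - 1 ∧ ∀ s ∈ l.tail, 2 ≤ s))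
    (A : (Fin t → Fin d) → ℝ)
    (hA : ∀ (σ : Equiv.Perm (Fin t)) (a : Fin t → Fin d), A (a ∘ σ) = A a) :
    ∀ (x : Fin d → ℝ) (k : Fin d),
      fderiv ℝ (fun y => ∑ a : Fin t → Fin d, Ftensor μ M t St y a * A a) x (Pi.single k 1)
        = t * ∑ a' : Fin (t - 1) → Fin d,
            Ftensor μ M (t - 1) St' x a' *
            A (fun i => if h : i.val < t - 1 then a' ⟨i.val, h⟩ else k) := by
  intro x k
  classical
  rw [(hasFDeriv_main μ M t St A x).fderiv]
  rw [show (∑ a : Fin t → Fin d, ∑ l ∈ St, Lmap μ M t A x a l) (Pi.single k 1)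
      = ∑ l ∈ St, ∑ a : Fin t → Fin d, entD μ M t A x k a l from by
    simp only [ContinuousLinearMap.sum_apply, Lmap_single]
    exact Finset.sum_comm]
  have hRHS : (∑ a' : Fin (t - 1) → Fin d, Ftensor μ M (t - 1) St' x a' *
        A (fun i => if h : i.val < t - 1 then a' ⟨i.val, h⟩ else k))
      = ∑ l' ∈ St', ∑ a' : Fin (t - 1) → Fin d,
          (if h : l'.headI + l'.tail.sum = t - 1 then
            (-1 : ℝ) ^ l'.tail.length *
            (((t - 1).factorial / (l'.map Nat.factorial).prod : ℕ) : ℝ) *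
            (∏ s : Fin l'.headI,
              (x (a' ⟨s.val, by have := s.isLt; omega⟩) -
               μ (a' ⟨s.val, by have := s.isLt; omega⟩))) *
            blockProd M l'.tail (fun s => a' ⟨l'.headI + s.val, by have := s.isLt; omega⟩)
          else 0) * A (fun i => if h : i.val < t - 1 then a' ⟨i.val, h⟩ else k) := by
    rw [← Finset.sum_comm]
    refine Finset.sum_congr rfl fun a' _ => ?_
    rw [show Ftensor μ M (t - 1) St' x a' = ∑ l' ∈ St',
          (if h : l'.headI + l'.tail.sum = t - 1 then
            (-1 : ℝ) ^ l'.tail.length *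
            (((t - 1).factorial / (l'.map Nat.factorial).prod : ℕ) : ℝ) *
            (∏ s : Fin l'.headI,
              (x (a' ⟨s.val, by have := s.isLt; omega⟩) -
               μ (a' ⟨s.val, by have := s.isLt; omega⟩))) *
            blockProd M l'.tail (fun s => a' ⟨l'.headI + s.val, by have := s.isLt; omega⟩)
          else 0) from rfl, Finset.sum_mul]
  rw [hRHS, Finset.mul_sum]
  rw [← Finset.sum_filter_of_ne (p := fun l => l.headI ≠ 0) (by
    intro l hl hne0
    by_contra h0
    have h0' : l.headI = 0 := by omega
    clear h0
    rename' h0' => h0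
    apply hne0
    refine Finset.sum_eq_zero fun a _ => ?_
    by_cases hcnd : l.headI + l.tail.sum = t
    · simp only [entD, dif_pos hcnd]
      haveI : IsEmpty (Fin l.headI) := by rw [h0]; infer_instance
      rw [Finset.univ_eq_empty, Finset.sum_empty, mul_zero]
    · simp only [entD, dif_neg hcnd])]
  refine Finset.sum_bij' (fun l _ => (l.headI - 1) :: l.tail)
    (fun l' _ => (l'.headI + 1) :: l'.tail) ?_ ?_ ?_ ?_ ?_
  · intro l hl
    obtain ⟨hmem, hh⟩ := Finset.mem_filter.mp hl
    obtain ⟨hne, hsum, htail⟩ := (hSt l).mp hmem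
    refine (hSt' _).mpr ⟨List.cons_ne_nil _ _, ?_, by simpa using htail⟩
    simp only [List.sum_cons]
    have := headI_add_tail_sum l hne
    omega
  · intro l' hl'
    obtain ⟨hne, hsum, htail⟩ := (hSt' l').mp hl'
    refine Finset.mem_filter.mpr ⟨(hSt _).mpr
      ⟨List.cons_ne_nil _ _, ?_, by simpa using htail⟩, by simp⟩
    simp only [List.sum_cons]
    have := headI_add_tail_sum l' hne
    omega
  · intro l hl
    obtain ⟨hmem, hh⟩ := Finset.mem_filter.mp hl
    obtain ⟨hne, -, -⟩ := (hSt l).mp hmem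
    simp only [List.headI_cons, List.tail_cons]
    rw [show l.headI - 1 + 1 = l.headI from by omega]
    exact headI_cons_tail l hne
  · intro l' hl'
    obtain ⟨hne, -, -⟩ := (hSt' l').mp hl'
    simp only [List.headI_cons, List.tail_cons, Nat.add_sub_cancel]
    exact headI_cons_tail l' hne
  · intro l hl
    obtain ⟨hmem, hh⟩ := Finset.mem_filter.mp hl
    obtain ⟨hne, hsuml, htail⟩ := (hSt l).mp hmem
    obtain ⟨hd, tlst, rfl⟩ := List.exists_cons_of_ne_nil hne
    simp only [List.headI_cons, List.tail_cons] at hh ⊢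
    obtain ⟨j, rfl⟩ : ∃ j, hd = j + 1 := ⟨hd - 1, by omega⟩
    simp only [Nat.add_sub_cancel]
    have hsum : j + 1 + tlst.sum = t := by simpa using hsuml
    have hcond : ((j + 1 : ℕ) :: tlst).headI + ((j + 1 : ℕ) :: tlst).tail.sum = t := by
      simpa using hsum
    have hcond' : ((j : ℕ) :: tlst).headI + ((j : ℕ) :: tlst).tail.sum = t - 1 := by
      simp only [List.headI_cons, List.tail_cons]
      omega
    have hC : ((j : ℝ) + 1) * ((-1 : ℝ) ^ tlst.length *
          ((t.factorial / (((j + 1 : ℕ) :: tlst).map Nat.factorial).prod : ℕ) : ℝ))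
        = (t : ℝ) * ((-1 : ℝ) ^ tlst.length *
          (((t - 1).factorial / (((j : ℕ) :: tlst).map Nat.factorial).prod : ℕ) : ℝ)) := by
      have hq := coeff_id j tlst.sum ((tlst.map Nat.factorial).prod)
        (list_prod_fact_dvd tlst)
      have hcast := congrArg (fun n : ℕ => (n : ℝ)) hq
      push_cast at hcast
      rw [← Nat.cast_list_sum] at hcast
      simp only [List.map_cons, List.prod_cons]
      rw [show t - 1 = j + tlst.sum from by omega,
        show t.factorial = (j + 1 + tlst.sum).factorial from by rw [hsum],
        show (t : ℝ) = (j : ℝ) + 1 + (tlst.sum : ℝ) from by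
          rw [← hsum]; push_cast; ring]
      linear_combination ((-1 : ℝ) ^ tlst.length) * hcast
    calc (∑ a : Fin t → Fin d, entD μ M t A x k a ((j + 1 : ℕ) :: tlst))
        = ∑ a : Fin t → Fin d,
          (((-1 : ℝ) ^ tlst.length *
            ((t.factorial / (((j + 1 : ℕ) :: tlst).map Nat.factorial).prod : ℕ) : ℝ)) *
            blockProd M tlst (fun u => a ⟨j + 1 + u.val, by have := u.isLt; omega⟩) * A a) *
          (∑ s : Fin (j + 1),
            (∏ s' ∈ Finset.univ.erase s,
              (x (a ⟨s'.val, by have := s'.isLt; omega⟩) -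
               μ (a ⟨s'.val, by have := s'.isLt; omega⟩))) *
            (if a ⟨s.val, by have := s.isLt; omega⟩ = k then 1 else 0)) :=
          Finset.sum_congr rfl fun a _ => by
            simp only [entD]
            rw [dif_pos hcond]
            rfl
      _ = t * ∑ a' : Fin (t - 1) → Fin d,
          (((-1 : ℝ) ^ tlst.length *
            (((t - 1).factorial / (((j : ℕ) :: tlst).map Nat.factorial).prod : ℕ) : ℝ)) *
            (∏ u : Fin j,
              (x (a' ⟨u.val, by have := u.isLt; omega⟩) -
               μ (a' ⟨u.val, by have := u.isLt; omega⟩))) *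
            blockProd M tlst (fun u => a' ⟨j + u.val, by have := u.isLt; omega⟩)) *
          A (fun i => if h : i.val < t - 1 then a' ⟨i.val, h⟩ else k) :=
          core μ M A x k ht hA j tlst hsum _ _ hC
      _ = t * ∑ a' : Fin (t - 1) → Fin d,
          (if h : ((j : ℕ) :: tlst).headI + ((j : ℕ) :: tlst).tail.sum = t - 1 then
            (-1 : ℝ) ^ ((j : ℕ) :: tlst).tail.length *
            (((t - 1).factorial / (((j : ℕ) :: tlst).map Nat.factorial).prod : ℕ) : ℝ) *
            (∏ s : Fin ((j : ℕ) :: tlst).headI,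
              (x (a' ⟨s.val, by have := s.isLt; omega⟩) -
               μ (a' ⟨s.val, by have := s.isLt; omega⟩))) *
            blockProd M ((j : ℕ) :: tlst).tail
              (fun s => a' ⟨((j : ℕ) :: tlst).headI + s.val, by have := s.isLt; omega⟩)
          else 0) * A (fun i => if h : i.val < t - 1 then a' ⟨i.val, h⟩ else k) := by
          refine congrArg (HMul.hMul (t : ℝ)) (Finset.sum_congr rfl fun a' _ => ?_)
          rw [dif_pos hcond']
          rfl
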